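/- Conservativity of observational equivalence under extension by unmentioned names: suppose P' ⊇ P and no name defined by P'∖P (i.e., no head of a rule in P'∖P) occurs in M, N, or P. Then M ≈_P N if and only if M ≈_{P'} N. -/

import Mathlib

/-- Terms of continuation calculus: names (coded as naturals) and dot. -/
inductive Tm where
  | name : ℕ → Tm
  | dot : Tm → Tm → Tm
deriving DecidableEq

/-- Right-hand sides of rules: names, variables (de Bruijn-style indices
into the left-hand side's variable list), and dot. -/
inductive Rhs where
  | name : ℕ → Rhs
  | var : ℕ → Rhs
  | dot : Rhs → Rhs → Rhs
deriving DecidableEq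

/-- A rule `n.x₁.⋯.xₖ → r`: head name, arity `k`, and right-hand side. -/
structure Rule where
  head : ℕ
  arity : ℕ
  rhs : Rhs
deriving DecidableEq

/-- A program is a finite set of rules. -/
abbrev Program := Finset Rule

/-- Variables occurring in a right-hand side. -/
def Rhs.HasVar : Rhs → ℕ → Prop
  | .name _, _ => False
  | .var w, v => w = v
  | .dot a b, v => a.HasVar v ∨ b.HasVar v

/-- Well-formedness: every variable of a right-hand side occurs in the
left-hand side, and there is at most one rule per head name. -/
def Program.Wf (P : Program) : Prop :=
  (∀ r ∈ P, ∀ v, r.rhs.HasVar v → v < r.arity) ∧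
  (∀ r₁ ∈ P, ∀ r₂ ∈ P, r₁.head = r₂.head → r₁ = r₂)

/-- `n.t₁.⋯.tₖ` : left-associated application of a term to a list of terms. -/
def Tm.apps : Tm → List Tm → Tm
  | h, [] => h
  | h, t :: ts => Tm.apps (h.dot t) ts

/-- Instantiation of a right-hand side with the terms matched by the
left-hand side variables; fails if some variable is out of range. -/
def Rhs.inst (ts : List Tm) : Rhs → Option Tm
  | .name n => some (.name n)
  | .var v => ts[v]?
  | .dot a b => do pure (.dot (← a.inst ts) (← b.inst ts))

/-- One-step evaluation `M →_P N`. -/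
def Step (P : Program) (M N : Tm) : Prop :=
  ∃ r ∈ P, ∃ ts : List Tm, ts.length = r.arity ∧
    M = Tm.apps (.name r.head) ts ∧ r.rhs.inst ts = some N

/-- Multi-step evaluation `M →*_P N`. -/
def Steps (P : Program) : Tm → Tm → Prop := Relation.ReflTransGen (Step P)

/-- `M` is final: it has no successor. -/
def Final (P : Program) (M : Tm) : Prop := ¬ ∃ N, Step P M N

/-- `M` terminates: it evaluates to a final term. -/
def Terminates (P : Program) (M : Tm) : Prop := ∃ N, Steps P M N ∧ Final P N

/-- The name `m` occurs in a term. -/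
def Tm.HasName (m : ℕ) : Tm → Prop
  | .name n => n = m
  | .dot a b => a.HasName m ∨ b.HasName m

/-- The name `m` occurs in a right-hand side. -/
def Rhs.HasName (m : ℕ) : Rhs → Prop
  | .name n => n = m
  | .var _ => False
  | .dot a b => a.HasName m ∨ b.HasName m

/-- The name `m` occurs (is mentioned) in a program. -/
def Program.HasName (P : Program) (m : ℕ) : Prop :=
  ∃ r ∈ P, r.head = m ∨ r.rhs.HasName m

/-- The name `m` is defined by the program (is the head of some rule). -/
def Program.Defines (P : Program) (m : ℕ) : Prop :=
  ∃ r ∈ P, r.head = m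

/-- Substitution of a term for a name, `M[fr := t]`. -/
def Tm.subName (m : ℕ) (t : Tm) : Tm → Tm
  | .name n => if n = m then t else .name n
  | .dot a b => .dot (Tm.subName m t a) (Tm.subName m t b)

/-- Common reduct relation `M =_P N`. -/
def CommonRed (P : Program) (M N : Tm) : Prop :=
  ∃ t, Steps P M t ∧ Steps P N t

/-- Observational equivalence `M ≈_P N`. -/
def ObsEq (P : Program) (M N : Tm) : Prop :=
  ∀ P' : Program, P'.Wf → P ⊆ P' →
    ∀ X : Tm, (Terminates P' (X.dot M) ↔ Terminates P' (X.dot N))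

/-- Renaming of names in a term. -/
def Tm.rename (f : ℕ → ℕ) : Tm → Tm
  | .name n => .name (f n)
  | .dot a b => .dot (a.rename f) (b.rename f)

/-- Renaming of names in a right-hand side. -/
def Rhs.rename (f : ℕ → ℕ) : Rhs → Rhs
  | .name n => .name (f n)
  | .var v => .var v
  | .dot a b => .dot (a.rename f) (b.rename f)

/-- Renaming of names in a rule. -/
def Rule.rename (f : ℕ → ℕ) (r : Rule) : Rule :=
  ⟨f r.head, r.arity, r.rhs.rename f⟩

/-- Renaming of names in a program. -/
def Program.rename (f : ℕ → ℕ) (P : Program) : Program :=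
  P.image (Rule.rename f)

/-- The fresh substitution `[n⃗ := m⃗]` as a function on names. -/
def renFun (ns ms : List ℕ) (n : ℕ) : ℕ :=
  ((ns.zip ms).lookup n).getD n

/-- `M` has arity `k` under `P`: `M = n.q₁.⋯.qᵢ` where `n` has a rule of
arity `i + k`. -/
def Tm.ArityIs (P : Program) (M : Tm) (k : ℕ) : Prop :=
  ∃ r ∈ P, ∃ ts : List Tm, M = Tm.apps (.name r.head) ts ∧ ts.length + k = r.arity

section AuxLemmas

/-! ### Max name bounds -/

def Tm.maxName : Tm → ℕ
  | .name n => n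
  | .dot a b => max a.maxName b.maxName

def Rhs.maxName : Rhs → ℕ
  | .name n => n
  | .var _ => 0
  | .dot a b => max a.maxName b.maxName

def Rule.maxName (r : Rule) : ℕ := max r.head r.rhs.maxName

def Program.maxName (P : Program) : ℕ := P.sup Rule.maxName

lemma Tm.hasName_le {t : Tm} {m : ℕ} (h : t.HasName m) : m ≤ t.maxName := by
  induction t with
  | name n => simp [Tm.HasName] at h; simp [Tm.maxName, h]
  | dot a b iha ihb =>
    cases h with
    | inl h => exact le_trans (iha h) (le_max_left _ _)
    | inr h => exact le_trans (ihb h) (le_max_right _ _)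

lemma Rhs.hasName_le {t : Rhs} {m : ℕ} (h : t.HasName m) : m ≤ t.maxName := by
  induction t with
  | name n => simp [Rhs.HasName] at h; simp [Rhs.maxName, h]
  | var v => exact absurd h id
  | dot a b iha ihb =>
    cases h with
    | inl h => exact le_trans (iha h) (le_max_left _ _)
    | inr h => exact le_trans (ihb h) (le_max_right _ _)

lemma Program.hasName_le {R : Program} {m : ℕ} (h : R.HasName m) : m ≤ R.maxName := by
  obtain ⟨r, hr, h⟩ := h
  have h1 : Rule.maxName r ≤ R.maxName := Finset.le_sup hr
  cases h with
  | inl h => subst h; exact le_trans (le_max_left _ _) h1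
  | inr h => exact le_trans (le_trans (Rhs.hasName_le h) (le_max_right _ _)) h1

/-! ### Renaming lemmas -/

lemma Tm.rename_apps (f : ℕ → ℕ) (h : Tm) (ts : List Tm) :
    (Tm.apps h ts).rename f = Tm.apps (h.rename f) (ts.map (Tm.rename f)) := by
  induction ts generalizing h with
  | nil => rfl
  | cons t ts ih => simp [Tm.apps, ih, Tm.rename]

lemma Rhs.inst_rename (f : ℕ → ℕ) {ts : List Tm} {r : Rhs} {b : Tm}
    (h : r.inst ts = some b) :
    (r.rename f).inst (ts.map (Tm.rename f)) = some (b.rename f) := by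
  induction r generalizing b with
  | name n =>
    simp [Rhs.inst] at h
    simp [Rhs.inst, Rhs.rename, ← h, Tm.rename]
  | var v =>
    simp [Rhs.inst] at h ⊢
    simp [Rhs.rename, Rhs.inst, List.getElem?_map, h]
  | dot a c iha ihc =>
    simp [Rhs.inst, Option.bind_eq_some_iff] at h
    obtain ⟨ta, ha, tc, hc, rfl⟩ := h
    simp [Rhs.rename, Rhs.inst, Option.bind_eq_some_iff]
    exact ⟨_, iha ha, _, ihc hc, rfl⟩

lemma Step.rename {Q : Program} {a b : Tm} (f : ℕ → ℕ) (h : Step Q a b) :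
    Step (Q.rename f) (a.rename f) (b.rename f) := by
  obtain ⟨r, hr, ts, hlen, ha, hinst⟩ := h
  refine ⟨r.rename f, Finset.mem_image_of_mem _ hr, ts.map (Tm.rename f),
    by simpa [Rule.rename] using hlen, ?_, ?_⟩
  · subst ha; simp [Tm.rename_apps, Rule.rename, Tm.rename]
  · exact Rhs.inst_rename f hinst

lemma Steps.rename' {Q : Program} {a b : Tm} (f : ℕ → ℕ) (h : Steps Q a b) :
    Steps (Q.rename f) (a.rename f) (b.rename f) := by
  induction h with
  | refl => exact Relation.ReflTransGen.refl
  | tail _ hst ih => exact ih.tail (hst.rename f)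

lemma Tm.rename_invol {f : ℕ → ℕ} (hf : ∀ n, f (f n) = n) (t : Tm) :
    (t.rename f).rename f = t := by
  induction t <;> simp [Tm.rename, *]

lemma Rhs.rename_invol {f : ℕ → ℕ} (hf : ∀ n, f (f n) = n) (t : Rhs) :
    (t.rename f).rename f = t := by
  induction t <;> simp [Rhs.rename, *]

lemma Rule.rename_invol {f : ℕ → ℕ} (hf : ∀ n, f (f n) = n) (r : Rule) :
    (r.rename f).rename f = r := by
  simp [Rule.rename, hf, Rhs.rename_invol hf]

lemma Program.rename_invol {f : ℕ → ℕ} (hf : ∀ n, f (f n) = n) (P : Program) :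
    (P.rename f).rename f = P := by
  ext r
  simp only [Program.rename, Finset.image_image, Finset.mem_image, Function.comp_apply]
  constructor
  · rintro ⟨s, hs, rfl⟩; rwa [Rule.rename_invol hf]
  · intro hr; exact ⟨r, hr, Rule.rename_invol hf r⟩

lemma step_rename_iff {f : ℕ → ℕ} (hf : ∀ n, f (f n) = n) {Q : Program} {a b : Tm} :
    Step (Q.rename f) (a.rename f) (b.rename f) ↔ Step Q a b := by
  constructor
  · intro h
    have := h.rename f
    rwa [Program.rename_invol hf, Tm.rename_invol hf, Tm.rename_invol hf] at this
  · exact fun h => h.rename f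

lemma final_rename_iff {f : ℕ → ℕ} (hf : ∀ n, f (f n) = n) {Q : Program} {t : Tm} :
    Final (Q.rename f) (t.rename f) ↔ Final Q t := by
  constructor
  · intro h hx
    obtain ⟨b, hb⟩ := hx
    exact h ⟨b.rename f, hb.rename f⟩
  · intro h hx
    obtain ⟨b, hb⟩ := hx
    have := hb.rename f
    rw [Program.rename_invol hf, Tm.rename_invol hf] at this
    exact h ⟨_, this⟩

lemma terminates_rename_iff {f : ℕ → ℕ} (hf : ∀ n, f (f n) = n) {Q : Program} {t : Tm} :
    Terminates (Q.rename f) (t.rename f) ↔ Terminates Q t := by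
  constructor
  · rintro ⟨n, hs, hfin⟩
    have hs' := hs.rename' f
    rw [Program.rename_invol hf, Tm.rename_invol hf] at hs'
    refine ⟨n.rename f, hs', ?_⟩
    have h2 : Final (Q.rename f) ((n.rename f).rename f) ↔ Final Q (n.rename f) :=
      final_rename_iff hf
    rw [Tm.rename_invol hf] at h2
    exact h2.mp hfin
  · rintro ⟨n, hs, hfin⟩
    exact ⟨n.rename f, hs.rename' f, (final_rename_iff hf).mpr hfin⟩

lemma Tm.hasName_rename {f : ℕ → ℕ} {t : Tm} {m : ℕ} :
    (t.rename f).HasName m ↔ ∃ n, t.HasName n ∧ f n = m := by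
  induction t with
  | name k =>
    simp only [Tm.rename, Tm.HasName]
    exact ⟨fun h => ⟨k, rfl, h⟩, fun ⟨n, hn, h⟩ => by subst hn; exact h⟩
  | dot a b iha ihb =>
    simp only [Tm.rename, Tm.HasName, iha, ihb]
    constructor
    · rintro (⟨n, hn, h⟩ | ⟨n, hn, h⟩)
      exacts [⟨n, Or.inl hn, h⟩, ⟨n, Or.inr hn, h⟩]
    · rintro ⟨n, hn | hn, h⟩
      exacts [Or.inl ⟨n, hn, h⟩, Or.inr ⟨n, hn, h⟩]

lemma Rhs.hasName_rename {f : ℕ → ℕ} {t : Rhs} {m : ℕ} :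
    (t.rename f).HasName m ↔ ∃ n, t.HasName n ∧ f n = m := by
  induction t with
  | name k =>
    simp only [Rhs.rename, Rhs.HasName]
    exact ⟨fun h => ⟨k, rfl, h⟩, fun ⟨n, hn, h⟩ => by subst hn; exact h⟩
  | var v => simp [Rhs.rename, Rhs.HasName]
  | dot a b iha ihb =>
    simp only [Rhs.rename, Rhs.HasName, iha, ihb]
    constructor
    · rintro (⟨n, hn, h⟩ | ⟨n, hn, h⟩)
      exacts [⟨n, Or.inl hn, h⟩, ⟨n, Or.inr hn, h⟩]
    · rintro ⟨n, hn | hn, h⟩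
      exacts [Or.inl ⟨n, hn, h⟩, Or.inr ⟨n, hn, h⟩]

lemma Rhs.hasVar_rename {f : ℕ → ℕ} {r : Rhs} {v : ℕ} :
    (r.rename f).HasVar v ↔ r.HasVar v := by
  induction r <;> simp [Rhs.rename, Rhs.HasVar, *]

lemma Tm.rename_fixed {f : ℕ → ℕ} {t : Tm} (h : ∀ m, t.HasName m → f m = m) :
    t.rename f = t := by
  induction t with
  | name n => simp [Tm.rename]; exact h n rfl
  | dot a b iha ihb =>
    simp only [Tm.rename, Tm.dot.injEq]
    exact ⟨iha fun m hm => h m (Or.inl hm), ihb fun m hm => h m (Or.inr hm)⟩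

lemma Rhs.rename_fixed {f : ℕ → ℕ} {t : Rhs} (h : ∀ m, t.HasName m → f m = m) :
    t.rename f = t := by
  induction t with
  | name n => simp [Rhs.rename]; exact h n rfl
  | var v => rfl
  | dot a b iha ihb =>
    simp only [Rhs.rename, Rhs.dot.injEq]
    exact ⟨iha fun m hm => h m (Or.inl hm), ihb fun m hm => h m (Or.inr hm)⟩

/-! ### Names and steps -/

lemma Tm.hasName_apps {h : Tm} {ts : List Tm} {m : ℕ} :
    (Tm.apps h ts).HasName m ↔ h.HasName m ∨ ∃ t ∈ ts, t.HasName m := by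
  induction ts generalizing h with
  | nil => simp [Tm.apps]
  | cons t ts ih =>
    simp only [Tm.apps, ih, Tm.HasName, List.mem_cons]
    constructor
    · rintro ((h | h) | ⟨u, hu, h⟩)
      exacts [Or.inl h, Or.inr ⟨t, Or.inl rfl, h⟩, Or.inr ⟨u, Or.inr hu, h⟩]
    · rintro (h | ⟨u, rfl | hu, h⟩)
      exacts [Or.inl (Or.inl h), Or.inl (Or.inr h), Or.inr ⟨u, hu, h⟩]

lemma Rhs.hasName_inst {ts : List Tm} {r : Rhs} {b : Tm} {m : ℕ}
    (h : r.inst ts = some b) (hb : b.HasName m) :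
    r.HasName m ∨ ∃ u ∈ ts, u.HasName m := by
  induction r generalizing b with
  | name n =>
    simp [Rhs.inst] at h
    subst h
    exact Or.inl hb
  | var v =>
    exact Or.inr ⟨b, List.mem_of_getElem? h, hb⟩
  | dot a c iha ihc =>
    simp [Rhs.inst, Option.bind_eq_some_iff] at h
    obtain ⟨ta, ha, tc, hc, rfl⟩ := h
    cases hb with
    | inl hb =>
      rcases iha ha hb with h | h
      exacts [Or.inl (Or.inl h), Or.inr h]
    | inr hb =>
      rcases ihc hc hb with h | h
      exacts [Or.inl (Or.inr h), Or.inr h]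

lemma Step.mono {R R' : Program} {t b : Tm} (h : R ⊆ R') (hs : Step R t b) :
    Step R' t b := by
  obtain ⟨r, hr, rest⟩ := hs
  exact ⟨r, h hr, rest⟩

lemma Steps.mono {R R' : Program} {t b : Tm} (h : R ⊆ R') (hs : Steps R t b) :
    Steps R' t b := by
  induction hs with
  | refl => exact Relation.ReflTransGen.refl
  | tail _ hst ih => exact ih.tail (hst.mono h)

lemma avoid_step {R : Program} {h : ℕ} (hR : ¬ R.HasName h) {t b : Tm}
    (ht : ¬ t.HasName h) (hst : Step R t b) : ¬ b.HasName h := by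
  obtain ⟨r, hr, ts, hlen, rfl, hinst⟩ := hst
  intro hb
  rcases Rhs.hasName_inst hinst hb with hrh | ⟨u, hu, hun⟩
  · exact hR ⟨r, hr, Or.inr hrh⟩
  · exact ht (Tm.hasName_apps.mpr (Or.inr ⟨u, hu, hun⟩))

lemma cons_step {R R' : Program} (hPn : ∀ r ∈ R', r ∉ R → ¬ R.HasName r.head)
    {t b : Tm} (ht : ∀ r ∈ R', r ∉ R → ¬ t.HasName r.head)
    (hst : Step R' t b) : Step R t b := by
  obtain ⟨r, hr, ts, hlen, rfl, hinst⟩ := hst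
  by_cases hrR : r ∈ R
  · exact ⟨r, hrR, ts, hlen, rfl, hinst⟩
  · exact absurd
      (Tm.hasName_apps.mpr (Or.inl (show (Tm.name r.head).HasName r.head from rfl)))
      (ht r hr hrR)

lemma cons_terminates {R R' : Program} (hsub : R ⊆ R')
    (hPn : ∀ r ∈ R', r ∉ R → ¬ R.HasName r.head)
    {t : Tm} (ht : ∀ r ∈ R', r ∉ R → ¬ t.HasName r.head) :
    Terminates R t ↔ Terminates R' t := by
  have key : ∀ {a b : Tm}, Steps R a b → (∀ r ∈ R', r ∉ R → ¬ a.HasName r.head) →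
      ∀ r ∈ R', r ∉ R → ¬ b.HasName r.head := by
    intro a b hs
    induction hs with
    | refl => exact fun h => h
    | tail _ hstep ih =>
      intro h r hr hrR
      exact avoid_step (hPn r hr hrR) (ih h r hr hrR) hstep
  constructor
  · rintro ⟨n, hs, hfin⟩
    refine ⟨n, hs.mono hsub, ?_⟩
    intro hx
    obtain ⟨b, hb⟩ := hx
    exact hfin ⟨b, cons_step hPn (key hs ht) hb⟩
  · rintro ⟨n, hs, hfin⟩
    have main : ∀ {a : Tm}, Steps R' a n →
        (∀ r ∈ R', r ∉ R → ¬ a.HasName r.head) → Steps R a n := by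
      intro a h
      induction h using Relation.ReflTransGen.head_induction_on with
      | refl => exact fun _ => Relation.ReflTransGen.refl
      | head hstep _ ih =>
        intro ha
        have h1 := cons_step hPn ha hstep
        exact Relation.ReflTransGen.head h1
          (ih fun r hr hrR => avoid_step (hPn r hr hrR) (ha r hr hrR) h1)
    refine ⟨n, main hs ht, ?_⟩
    intro hx
    obtain ⟨b, hb⟩ := hx
    exact hfin ⟨b, hb.mono hsub⟩

end AuxLemmas

theorem obsEq_conservative_extension (P P' : Program) (hP : P.Wf) (hP' : P'.Wf)
    (hsub : P ⊆ P') (M N : Tm)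
    (hfresh : ∀ r ∈ P', r ∉ P →
      ¬ Tm.HasName r.head M ∧ ¬ Tm.HasName r.head N ∧ ¬ P.HasName r.head) :
    ObsEq P M N ↔ ObsEq P' M N := by
  constructor
  · intro h Q hQwf hQsub X
    exact h Q hQwf (hsub.trans hQsub) X
  · intro h Q hQwf hQsub X
    classical
    set H : Finset ℕ := (P' \ P).image Rule.head with hHdef
    set B : ℕ := Q.maxName + P'.maxName + X.maxName + M.maxName + N.maxName + 1 with hBdef
    set f : ℕ → ℕ :=
      fun n => if n ∈ H then n + B else if B ≤ n ∧ n - B ∈ H then n - B else n with hfdef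
    -- basic facts about H, B, f
    have hHlt : ∀ m ∈ H, m < B := by
      intro m hm
      obtain ⟨s, hs, rfl⟩ := Finset.mem_image.mp hm
      have hs' : s ∈ P' := (Finset.mem_sdiff.mp hs).1
      have h1 : Rule.maxName s ≤ P'.maxName := Finset.le_sup hs'
      have h2 : s.head ≤ Rule.maxName s := le_max_left _ _
      omega
    have hff : ∀ n, f (f n) = n := by
      intro n
      by_cases h1 : n ∈ H
      · have hn := hHlt _ h1
        have h2 : n + B ∉ H := fun hc => by have := hHlt _ hc; omega
        have h3 : n + B - B ∈ H := by rwa [Nat.add_sub_cancel]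
        simp only [hfdef, if_pos h1, if_neg h2]
        rw [if_pos (show B ≤ n + B ∧ n + B - B ∈ H from ⟨Nat.le_add_left B n, h3⟩)]
        omega
      · by_cases h2 : B ≤ n ∧ n - B ∈ H
        · simp only [hfdef, if_neg h1, if_pos h2, if_pos h2.2]
          omega
        · simp only [hfdef, if_neg h1, if_neg h2, if_neg h1, if_neg h2]
    have hfinj : Function.Injective f := fun a b hab => by
      rw [← hff a, hab, hff]
    have hfix : ∀ n, n < B → n ∉ H → f n = n := by
      intro n hn h1
      simp only [hfdef, if_neg h1]
      rw [if_neg]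
      omega
    have hfH : ∀ n, n < B → f n ∉ H := by
      intro n hn
      by_cases h1 : n ∈ H
      · simp only [hfdef, if_pos h1]
        intro hc
        have := hHlt _ hc
        omega
      · rw [hfix n hn h1]
        exact h1
    -- heads of H are fresh for M, N, P
    have hMH : ∀ m ∈ H, ¬ M.HasName m := by
      intro m hm
      obtain ⟨s, hs, rfl⟩ := Finset.mem_image.mp hm
      obtain ⟨hs1, hs2⟩ := Finset.mem_sdiff.mp hs
      exact (hfresh s hs1 hs2).1
    have hNH : ∀ m ∈ H, ¬ N.HasName m := by
      intro m hm
      obtain ⟨s, hs, rfl⟩ := Finset.mem_image.mp hm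
      obtain ⟨hs1, hs2⟩ := Finset.mem_sdiff.mp hs
      exact (hfresh s hs1 hs2).2.1
    have hPH : ∀ m ∈ H, ¬ P.HasName m := by
      intro m hm
      obtain ⟨s, hs, rfl⟩ := Finset.mem_image.mp hm
      obtain ⟨hs1, hs2⟩ := Finset.mem_sdiff.mp hs
      exact (hfresh s hs1 hs2).2.2
    -- f fixes M, N, P
    have hMfix : M.rename f = M := by
      apply Tm.rename_fixed
      intro m hm
      have h1 : m < B := by have := Tm.hasName_le hm; omega
      exact hfix m h1 fun hc => hMH m hc hm
    have hNfix : N.rename f = N := by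
      apply Tm.rename_fixed
      intro m hm
      have h1 : m < B := by have := Tm.hasName_le hm; omega
      exact hfix m h1 fun hc => hNH m hc hm
    have hPnamefix : ∀ m, P.HasName m → f m = m := by
      intro m hm
      have h1 : m ≤ P'.maxName := le_trans (Program.hasName_le hm) (Finset.sup_mono hsub)
      exact hfix m (by omega) fun hc => hPH m hc hm
    have hPrulefix : ∀ r ∈ P, Rule.rename f r = r := by
      intro r hr
      have h1 : f r.head = r.head := hPnamefix r.head ⟨r, hr, Or.inl rfl⟩
      have h2 : r.rhs.rename f = r.rhs :=
        Rhs.rename_fixed fun m hm => hPnamefix m ⟨r, hr, Or.inr hm⟩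
      simp [Rule.rename, h1, h2]
    -- the renamed program Q̃
    set Qr : Program := Q.rename f with hQrdef
    have hQname_lt : ∀ m, Q.HasName m → m < B := by
      intro m hm
      have := Program.hasName_le hm
      omega
    have hPQr : P ⊆ Qr := by
      intro r hr
      rw [← hPrulefix r hr]
      exact Finset.mem_image_of_mem _ (hQsub hr)
    have hQrname : ∀ m, Qr.HasName m → m ∉ H := by
      intro m hm
      obtain ⟨r, hr, hcase⟩ := hm
      obtain ⟨s, hs, rfl⟩ := Finset.mem_image.mp hr
      cases hcase with
      | inl hc =>
        have : (Rule.rename f s).head = f s.head := rfl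
        rw [this] at hc
        subst hc
        exact hfH _ (hQname_lt _ ⟨s, hs, Or.inl rfl⟩)
      | inr hc =>
        have hc' : (s.rhs.rename f).HasName m := hc
        obtain ⟨n, hn, rfl⟩ := Rhs.hasName_rename.mp hc'
        exact hfH _ (hQname_lt _ ⟨s, hs, Or.inr hn⟩)
    have hXrname : ∀ m, (X.rename f).HasName m → m ∉ H := by
      intro m hm
      obtain ⟨n, hn, rfl⟩ := Tm.hasName_rename.mp hm
      have h1 : n < B := by have := Tm.hasName_le hn; omega
      exact hfH _ h1
    have hQrwf : Qr.Wf := by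
      constructor
      · intro r hr v hv
        obtain ⟨s, hs, rfl⟩ := Finset.mem_image.mp hr
        have hv' : s.rhs.HasVar v := Rhs.hasVar_rename.mp hv
        exact hQwf.1 s hs v hv'
      · intro r1 hr1 r2 hr2 hh
        obtain ⟨s1, hs1, rfl⟩ := Finset.mem_image.mp hr1
        obtain ⟨s2, hs2, rfl⟩ := Finset.mem_image.mp hr2
        have : f s1.head = f s2.head := hh
        have hheads : s1.head = s2.head := hfinj this
        rw [hQwf.2 s1 hs1 s2 hs2 hheads]
    -- decomposition of members of Qr ∪ P'
    have hmem : ∀ r ∈ Qr ∪ P', r ∈ Qr ∨ (r ∈ P' ∧ r.head ∈ H) := by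
      intro r hr
      rcases Finset.mem_union.mp hr with h1 | h1
      · exact Or.inl h1
      · by_cases h2 : r ∈ P
        · left
          rw [← hPrulefix r h2]
          exact Finset.mem_image_of_mem _ (hQsub h2)
        · exact Or.inr ⟨h1, Finset.mem_image_of_mem _ (Finset.mem_sdiff.mpr ⟨h1, h2⟩)⟩
    have hUwf : (Qr ∪ P').Wf := by
      constructor
      · intro r hr v hv
        rcases Finset.mem_union.mp hr with h1 | h1
        · exact hQrwf.1 r h1 v hv
        · exact hP'.1 r h1 v hv
      · intro r1 hr1 r2 hr2 hh
        rcases hmem r1 hr1 with h1 | ⟨h1, h1H⟩ <;> rcases hmem r2 hr2 with h2 | ⟨h2, h2H⟩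
        · exact hQrwf.2 r1 h1 r2 h2 hh
        · exact absurd (hh ▸ h2H) (hQrname r1.head ⟨r1, h1, Or.inl rfl⟩)
        · exact absurd (hh ▸ h1H : r2.head ∈ H) (hQrname r2.head ⟨r2, h2, Or.inl rfl⟩)
        · exact hP'.2 r1 h1 r2 h2 hh
    -- conservativity hypotheses for Qr ⊆ Qr ∪ P'
    have hdiffH : ∀ r ∈ Qr ∪ P', r ∉ Qr → r.head ∈ H := by
      intro r hr hrQ
      rcases hmem r hr with h1 | ⟨_, h1⟩
      · exact absurd h1 hrQ
      · exact h1
    have hPn : ∀ r ∈ Qr ∪ P', r ∉ Qr → ¬ Qr.HasName r.head := by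
      intro r hr hrQ hc
      exact hQrname r.head hc (hdiffH r hr hrQ)
    have havM : ∀ r ∈ Qr ∪ P', r ∉ Qr → ¬ ((X.rename f).dot M).HasName r.head := by
      intro r hr hrQ hc
      have hH' := hdiffH r hr hrQ
      cases hc with
      | inl hc => exact hXrname _ hc hH'
      | inr hc => exact hMH _ hH' hc
    have havN : ∀ r ∈ Qr ∪ P', r ∉ Qr → ¬ ((X.rename f).dot N).HasName r.head := by
      intro r hr hrQ hc
      have hH' := hdiffH r hr hrQ
      cases hc with
      | inl hc => exact hXrname _ hc hH'
      | inr hc => exact hNH _ hH' hc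
    -- chain of equivalences
    have erenM : (X.dot M).rename f = (X.rename f).dot M := by
      show Tm.dot (X.rename f) (M.rename f) = _
      rw [hMfix]
    have erenN : (X.dot N).rename f = (X.rename f).dot N := by
      show Tm.dot (X.rename f) (N.rename f) = _
      rw [hNfix]
    have e1 : Terminates Q (X.dot M) ↔ Terminates Qr ((X.rename f).dot M) := by
      rw [← erenM]
      exact (terminates_rename_iff hff).symm
    have e5 : Terminates Q (X.dot N) ↔ Terminates Qr ((X.rename f).dot N) := by
      rw [← erenN]
      exact (terminates_rename_iff hff).symm
    have e2 : Terminates Qr ((X.rename f).dot M) ↔ Terminates (Qr ∪ P') ((X.rename f).dot M) :=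
      cons_terminates Finset.subset_union_left hPn havM
    have e4 : Terminates Qr ((X.rename f).dot N) ↔ Terminates (Qr ∪ P') ((X.rename f).dot N) :=
      cons_terminates Finset.subset_union_left hPn havN
    have e3 := h (Qr ∪ P') hUwf Finset.subset_union_right (X.rename f)
    rw [e1, e2, e3, ← e4, ← e5]
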